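/- Let Z be positive definite with extremal eigenvalues a ≥ b > 0 and let E be an orthogonal projection. Then EZE ≤ ((a+b)²/(4ab)) · Z in the Loewner order. -/

import Mathlib

open scoped ComplexOrder

variable {n : ℕ}

lemma psd_smul {M : Matrix (Fin n) (Fin n) ℂ} (hM : M.PosSemidef) {c : ℝ} (hc : 0 ≤ c) :
    (c • M).PosSemidef := by
  rw [Matrix.posSemidef_iff_dotProduct_mulVec]
  constructor
  · unfold Matrix.IsHermitian
    rw [Matrix.conjTranspose_smul, star_trivial, hM.1]
  · intro x
    rw [Matrix.smul_mulVec, dotProduct_smul]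
    have h := hM.dotProduct_mulVec_nonneg x
    rw [Complex.real_smul]
    exact mul_nonneg (Complex.zero_le_real.mpr hc) h

lemma psd_smul_one_sub {Z : Matrix (Fin n) (Fin n) ℂ} (hZ : Z.IsHermitian) {a : ℝ}
    (ha : ∀ i, hZ.eigenvalues i ≤ a) :
    ((a : ℝ) • (1 : Matrix (Fin n) (Fin n) ℂ) - Z).PosSemidef := by
  have hspec := hZ.spectral_theorem
  set U : Matrix (Fin n) (Fin n) ℂ := (hZ.eigenvectorUnitary : Matrix (Fin n) (Fin n) ℂ) with hU
  have hUU : U * star U = 1 := Matrix.mem_unitaryGroup_iff.mp hZ.eigenvectorUnitary.2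
  have h1 : (a : ℝ) • (1 : Matrix (Fin n) (Fin n) ℂ) - Z
      = U * (Matrix.diagonal (fun i => ((a - hZ.eigenvalues i : ℝ) : ℂ))) * star U := by
    have hd : (Matrix.diagonal (fun i => ((a - hZ.eigenvalues i : ℝ) : ℂ)))
        = (a : ℝ) • (1 : Matrix (Fin n) (Fin n) ℂ)
          - Matrix.diagonal (RCLike.ofReal ∘ hZ.eigenvalues) := by
      ext i j
      by_cases h : i = j <;>
        simp [h, Matrix.diagonal, Matrix.one_apply, Complex.ofReal_sub, Complex.real_smul]
    rw [hd, mul_sub, sub_mul, Matrix.mul_smul, Matrix.mul_one, Matrix.smul_mul,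
      hUU]
    exact congrArg (fun X => (a : ℝ) • (1 : Matrix (Fin n) (Fin n) ℂ) - X) hspec
  rw [h1]
  exact (Matrix.posSemidef_diagonal_iff.mpr fun i =>
    Complex.zero_le_real.mpr (by linarith [ha i])).mul_mul_conjTranspose_same U

lemma psd_sub_smul_one {Z : Matrix (Fin n) (Fin n) ℂ} (hZ : Z.IsHermitian) {b : ℝ}
    (hb : ∀ i, b ≤ hZ.eigenvalues i) :
    (Z - (b : ℝ) • (1 : Matrix (Fin n) (Fin n) ℂ)).PosSemidef := by
  have hspec := hZ.spectral_theorem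
  set U : Matrix (Fin n) (Fin n) ℂ := (hZ.eigenvectorUnitary : Matrix (Fin n) (Fin n) ℂ) with hU
  have hUU : U * star U = 1 := Matrix.mem_unitaryGroup_iff.mp hZ.eigenvectorUnitary.2
  have h1 : Z - (b : ℝ) • (1 : Matrix (Fin n) (Fin n) ℂ)
      = U * (Matrix.diagonal (fun i => ((hZ.eigenvalues i - b : ℝ) : ℂ))) * star U := by
    have hd : (Matrix.diagonal (fun i => ((hZ.eigenvalues i - b : ℝ) : ℂ)))
        = Matrix.diagonal (RCLike.ofReal ∘ hZ.eigenvalues)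
          - (b : ℝ) • (1 : Matrix (Fin n) (Fin n) ℂ) := by
      ext i j
      by_cases h : i = j <;>
        simp [h, Matrix.diagonal, Matrix.one_apply, Complex.ofReal_sub, Complex.real_smul]
    rw [hd, mul_sub, sub_mul, Matrix.mul_smul, Matrix.mul_one, Matrix.smul_mul,
      hUU]
    exact congrArg (fun X => X - (b : ℝ) • (1 : Matrix (Fin n) (Fin n) ℂ)) hspec
  rw [h1]
  exact (Matrix.posSemidef_diagonal_iff.mpr fun i =>
    Complex.zero_le_real.mpr (by linarith [hb i])).mul_mul_conjTranspose_same U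

lemma psd_one_sub_proj (E : Matrix (Fin n) (Fin n) ℂ) (hE1 : E.conjTranspose = E)
    (hE2 : E * E = E) : ((1 : Matrix (Fin n) (Fin n) ℂ) - E).PosSemidef := by
  have h : (1 : Matrix (Fin n) (Fin n) ℂ) - E = (1 - E).conjTranspose * (1 - E) := by
    rw [Matrix.conjTranspose_sub, Matrix.conjTranspose_one, hE1, mul_sub, sub_mul, sub_mul,
      Matrix.mul_one, hE2, Matrix.one_mul]
    simp
  rw [h]
  exact Matrix.posSemidef_conjTranspose_mul_self _

theorem stmt_8 (n : ℕ) (E Z : Matrix (Fin n) (Fin n) ℂ)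
    (hE1 : E.conjTranspose = E) (hE2 : E * E = E) (hZ : Z.PosDef) (a b : ℝ)
    (ha : ∀ i, hZ.1.eigenvalues i ≤ a) (ha' : ∃ i, hZ.1.eigenvalues i = a)
    (hb : ∀ i, b ≤ hZ.1.eigenvalues i) (hb' : ∃ i, hZ.1.eigenvalues i = b) :
    (((a + b) ^ 2 / (4 * a * b) : ℝ) • Z - E * Z * E).PosSemidef := by
  obtain ⟨ia, hia⟩ := ha'
  obtain ⟨ib, hib⟩ := hb'
  have hbpos : 0 < b := hib ▸ hZ.eigenvalues_pos ib
  have hapos : 0 < a := hia ▸ hZ.eigenvalues_pos ia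
  have hab : b ≤ a := hia ▸ hb ia
  have hA : ((a : ℝ) • (1 : Matrix (Fin n) (Fin n) ℂ) - Z).PosSemidef := psd_smul_one_sub hZ.1 ha
  have hB : (Z - (b : ℝ) • (1 : Matrix (Fin n) (Fin n) ℂ)).PosSemidef := psd_sub_smul_one hZ.1 hb
  rcases eq_or_lt_of_le hab with heq | hlt
  · -- case a = b : Z = a • 1
    subst heq
    have hZa : Z = (b : ℝ) • (1 : Matrix (Fin n) (Fin n) ℂ) := by
      have hev : ∀ i, hZ.1.eigenvalues i = b := fun i => le_antisymm (ha i) (hb i)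
      have hd : Matrix.diagonal (RCLike.ofReal ∘ hZ.1.eigenvalues)
          = (b : ℝ) • (1 : Matrix (Fin n) (Fin n) ℂ) := by
        ext i j
        by_cases h : i = j <;>
          simp [h, Matrix.diagonal, Matrix.one_apply, hev, Complex.real_smul]
      have hUU : (hZ.1.eigenvectorUnitary : Matrix (Fin n) (Fin n) ℂ)
          * star (hZ.1.eigenvectorUnitary : Matrix (Fin n) (Fin n) ℂ) = 1 :=
        Matrix.mem_unitaryGroup_iff.mp hZ.1.eigenvectorUnitary.2
      rw [hZ.1.spectral_theorem, Unitary.conjStarAlgAut_apply, hd, Matrix.mul_smul, Matrix.mul_one, Matrix.smul_mul, hUU]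
    have hcoeff : ((b + b) ^ 2 / (4 * b * b) : ℝ) = 1 := by
      field_simp
      ring
    rw [hcoeff, hZa, one_smul, Matrix.mul_smul, Matrix.smul_mul, Matrix.mul_one, hE2,
      ← smul_sub]
    exact psd_smul (psd_one_sub_proj E hE1 hE2) hbpos.le
  · -- case b < a
    set W₁ : Matrix (Fin n) (Fin n) ℂ := (a - b) • E - (a + b) • (1 - E) with hW₁def
    set W₂ : Matrix (Fin n) (Fin n) ℂ := (a - b) • E + (a + b) • (1 - E) with hW₂def
    have hW₁ : W₁.conjTranspose = W₁ := by
      simp [hW₁def, Matrix.conjTranspose_sub, Matrix.conjTranspose_smul,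
        Matrix.conjTranspose_one, hE1]
    have hW₂ : W₂.conjTranspose = W₂ := by
      simp [hW₂def, Matrix.conjTranspose_add, Matrix.conjTranspose_sub,
        Matrix.conjTranspose_smul, Matrix.conjTranspose_one, hE1]
    have key : b • (W₁ * ((a : ℝ) • (1 : Matrix (Fin n) (Fin n) ℂ) - Z) * W₁)
        + a • (W₂ * (Z - (b : ℝ) • (1 : Matrix (Fin n) (Fin n) ℂ)) * W₂)
        = (a - b) • ((a + b) ^ 2 • Z - (4 * a * b) • (E * Z * E)) := by
      simp only [hW₁def, hW₂def, sub_mul, mul_sub, add_mul, mul_add,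
        Matrix.smul_mul, Matrix.mul_smul, Matrix.mul_one, Matrix.one_mul, mul_one, one_mul, hE2,
        smul_smul, smul_sub, smul_add, sub_smul, add_smul]
      module
    have hpsd1 : (W₁ * ((a : ℝ) • (1 : Matrix (Fin n) (Fin n) ℂ) - Z) * W₁).PosSemidef := by
      have h := hA.mul_mul_conjTranspose_same W₁
      rwa [hW₁] at h
    have hpsd2 : (W₂ * (Z - (b : ℝ) • (1 : Matrix (Fin n) (Fin n) ℂ)) * W₂).PosSemidef := by
      have h := hB.mul_mul_conjTranspose_same W₂
      rwa [hW₂] at h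
    have hM : (((a + b) ^ 2 : ℝ) • Z - ((4 * a * b : ℝ)) • (E * Z * E)).PosSemidef := by
      have h := (psd_smul hpsd1 hbpos.le).add (psd_smul hpsd2 hapos.le)
      rw [key] at h
      have h2 := psd_smul h (c := (a - b)⁻¹) (inv_nonneg.mpr (sub_nonneg.mpr hab))
      rwa [smul_smul, inv_mul_cancel₀ (sub_ne_zero.mpr hlt.ne'), one_smul] at h2
    have hfinal : (((a + b) ^ 2 / (4 * a * b) : ℝ) • Z - E * Z * E)
        = ((4 * a * b : ℝ)⁻¹) • (((a + b) ^ 2 : ℝ) • Z - ((4 * a * b : ℝ)) • (E * Z * E)) := by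
      have hne : (4 * a * b : ℝ) ≠ 0 := by positivity
      rw [smul_sub, smul_smul, smul_smul, inv_mul_cancel₀ hne, one_smul]
      congr 1
      rw [div_eq_inv_mul]
    rw [hfinal]
    exact psd_smul hM (by positivity)
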